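/- Let X ∈ ℝ^{n×p} and let Y = XB + W, where B ∈ ℝ^{p×L} satisfies B[i,:] = 0 for all i ∉ S for an index set S ⊆ {1,…,p} with card(S) = k, and W ∈ ℝ^{n×L}. Let 0 ≤ δ < 1 be such that (1−δ)‖b‖₂² ≤ ‖Xb‖₂² for every vector b ∈ ℝ^p with at most k+1 nonzero entries, let B_min = min_{i∈S} ‖B[i,:]‖₂, and let S' ⊊ S be a proper subset. If for some Γ > 0 the noise satisfies ‖W‖_F < (Γ/(1+Γ))·√(1−δ)·B_min, then ‖(Iₙ − P(S))Y‖_F / ‖(Iₙ − P(S'))Y‖_F < Γ. -/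

import Mathlib

open Matrix

/-- The squared Frobenius norm of a real matrix. -/
noncomputable def frobSq {n L : ℕ} (A : Matrix (Fin n) (Fin L) ℝ) : ℝ :=
  ∑ i, ∑ j, A i j ^ 2

/-- The Frobenius norm of a real matrix. -/
noncomputable def frob {n L : ℕ} (A : Matrix (Fin n) (Fin L) ℝ) : ℝ :=
  Real.sqrt (frobSq A)

/-- The span of the columns of `X` indexed by the index set `S`. -/
def colSpan {n p : ℕ} (X : Matrix (Fin n) (Fin p) ℝ) (S : Finset (Fin p)) :
    Submodule ℝ (Fin n → ℝ) :=
  Submodule.span ℝ ((fun j => fun i => X i j) '' (S : Set (Fin p)))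

/-- `P` is the orthogonal projection matrix onto the subspace `V` of `ℝⁿ`. -/
def IsOrthProjOnto {n : ℕ} (P : Matrix (Fin n) (Fin n) ℝ)
    (V : Submodule ℝ (Fin n → ℝ)) : Prop :=
  P * P = P ∧ Pᵀ = P ∧ LinearMap.range P.mulVecLin = V

/-- The minimum Euclidean row norm `min_{i ∈ S} ‖B[i,:]‖₂` of the rows of `B` indexed
by `S`. -/
noncomputable def minRowNorm {p L : ℕ} (B : Matrix (Fin p) (Fin L) ℝ)
    (S : Finset (Fin p)) : ℝ :=
  sInf ((fun i => Real.sqrt (∑ j, B i j ^ 2)) '' (S : Set (Fin p)))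

/-! ### Auxiliary lemmas -/

noncomputable def toE {n L : ℕ} (A : Matrix (Fin n) (Fin L) ℝ) :
    EuclideanSpace ℝ (Fin n × Fin L) := WithLp.toLp 2 (fun ij => A ij.1 ij.2)

lemma frob_eq_norm {n L : ℕ} (A : Matrix (Fin n) (Fin L) ℝ) : frob A = ‖toE A‖ := by
  rw [EuclideanSpace.norm_eq]
  unfold frob frobSq toE
  congr 1
  rw [Fintype.sum_prod_type]
  exact Finset.sum_congr rfl fun i _ => Finset.sum_congr rfl fun j _ => by
    rw [Real.norm_eq_abs, sq_abs, WithLp.ofLp_toLp]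

lemma frobSq_nonneg {n L : ℕ} (A : Matrix (Fin n) (Fin L) ℝ) : 0 ≤ frobSq A :=
  Finset.sum_nonneg fun _ _ => Finset.sum_nonneg fun _ _ => sq_nonneg _

lemma frob_nonneg {n L : ℕ} (A : Matrix (Fin n) (Fin L) ℝ) : 0 ≤ frob A :=
  Real.sqrt_nonneg _

lemma frob_mono {n L : ℕ} {A C : Matrix (Fin n) (Fin L) ℝ} (h : frobSq A ≤ frobSq C) :
    frob A ≤ frob C := Real.sqrt_le_sqrt h

lemma frobSq_col {n L : ℕ} (A : Matrix (Fin n) (Fin L) ℝ) :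
    frobSq A = ∑ j, ∑ i, A i j ^ 2 := Finset.sum_comm

lemma mul_col {n m L : ℕ} (M : Matrix (Fin n) (Fin m) ℝ) (A : Matrix (Fin m) (Fin L) ℝ)
    (i : Fin n) (j : Fin L) : (M * A) i j = M.mulVec (fun r => A r j) i := by
  simp [Matrix.mul_apply, Matrix.mulVec, dotProduct]

/-- idempotent symmetric matrix: `Mv ⬝ Mv = Mv ⬝ v`. -/
lemma proj_dot {n : ℕ} {M : Matrix (Fin n) (Fin n) ℝ} (h1 : M * M = M) (h2 : Mᵀ = M)
    (v : Fin n → ℝ) : (M *ᵥ v) ⬝ᵥ (M *ᵥ v) = (M *ᵥ v) ⬝ᵥ v := by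
  rw [Matrix.dotProduct_mulVec]
  congr 1
  have : (M *ᵥ v) ᵥ* M = (M *ᵥ v) ᵥ* Mᵀ := by rw [h2]
  rw [this, Matrix.vecMul_transpose, Matrix.mulVec_mulVec, h1]

lemma sum_sq_eq_dot {n : ℕ} (v : Fin n → ℝ) : ∑ i, v i ^ 2 = v ⬝ᵥ v := by
  simp [dotProduct, sq]

/-- Contraction: `‖(1-P)v‖² ≤ ‖v‖²` for an orthogonal projection `P`. -/
lemma proj_contract {n : ℕ} {P : Matrix (Fin n) (Fin n) ℝ} (h1 : P * P = P) (h2 : Pᵀ = P)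
    (v : Fin n → ℝ) : ∑ i, ((1 - P) *ᵥ v) i ^ 2 ≤ ∑ i, v i ^ 2 := by
  set Q : Matrix (Fin n) (Fin n) ℝ := 1 - P with hQ
  have hQ1 : Q * Q = Q := by
    simp [hQ, Matrix.mul_sub, Matrix.sub_mul, h1]
  have hQ2 : Qᵀ = Q := by simp [hQ, Matrix.transpose_sub, h2]
  have hqd := proj_dot hQ1 hQ2 v
  have hpd := proj_dot h1 h2 v
  have hsplit : Q *ᵥ v = v - P *ᵥ v := by
    simp [hQ, Matrix.sub_mulVec]
  rw [sum_sq_eq_dot, sum_sq_eq_dot, hqd, hsplit]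
  have hnn : 0 ≤ (P *ᵥ v) ⬝ᵥ (P *ᵥ v) :=
    Finset.sum_nonneg fun i _ => mul_self_nonneg _
  rw [hpd] at hnn
  have : (v - P *ᵥ v) ⬝ᵥ v = v ⬝ᵥ v - (P *ᵥ v) ⬝ᵥ v := by
    simp [sub_dotProduct]
  rw [this]
  linarith

lemma proj_fix {n : ℕ} {P : Matrix (Fin n) (Fin n) ℝ} (h1 : P * P = P)
    {u : Fin n → ℝ} (hu : u ∈ LinearMap.range P.mulVecLin) : P *ᵥ u = u := by
  obtain ⟨w, rfl⟩ := hu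
  rw [Matrix.mulVecLin_apply, Matrix.mulVec_mulVec, h1]

/-- The submodule of vectors supported on `S`. -/
def suppSub {p : ℕ} (S : Finset (Fin p)) : Submodule ℝ (Fin p → ℝ) where
  carrier := {c | ∀ i ∉ S, c i = 0}
  add_mem' := fun {a b} ha hb i hi => by simp [ha i hi, hb i hi]
  zero_mem' := fun i _ => rfl
  smul_mem' := fun r c hc i hi => by simp [hc i hi]

lemma mulVec_mem_colSpan {n p : ℕ} (X : Matrix (Fin n) (Fin p) ℝ) (S : Finset (Fin p))
    {b : Fin p → ℝ} (hb : ∀ i ∉ S, b i = 0) : X *ᵥ b ∈ colSpan X S := by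
  have : X *ᵥ b = ∑ i ∈ S, b i • (fun r => X r i) := by
    funext r
    rw [Finset.sum_apply]
    simp only [Pi.smul_apply, smul_eq_mul]
    rw [Matrix.mulVec, dotProduct]
    rw [← Finset.sum_subset (Finset.subset_univ S)
      (fun i _ hi => by rw [hb i hi, mul_zero])]
    exact Finset.sum_congr rfl fun i _ => mul_comm _ _
  rw [this]
  exact Submodule.sum_mem _ fun i hi => Submodule.smul_mem _ _
    (Submodule.subset_span ⟨i, hi, rfl⟩)

lemma colSpan_le_map {n p : ℕ} (X : Matrix (Fin n) (Fin p) ℝ) (S : Finset (Fin p)) :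
    colSpan X S ≤ Submodule.map X.mulVecLin (suppSub S) := by
  apply Submodule.span_le.mpr
  rintro _ ⟨j, hj, rfl⟩
  refine ⟨Pi.single j 1, fun i hi => Pi.single_eq_of_ne (fun h => hi (by rw [h]; exact hj)) 1, ?_⟩
  funext i
  simp [Matrix.mulVecLin_apply, Matrix.mulVec_single]

/-- if `Y = XB + W` with `B` row-supported on `S`, `card S = k`,
`(1−δ)‖b‖₂² ≤ ‖Xb‖₂²` for all `(k+1)`-sparse `b`, `S' ⊊ S`, and for some `Γ > 0` the noise
satisfies `‖W‖_F < (Γ/(1+Γ))·√(1−δ)·B_min`, then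
`‖(Iₙ−P(S))Y‖_F / ‖(Iₙ−P(S'))Y‖_F < Γ`. -/
theorem residual_ratio_below_threshold_RIC
    {n p L k : ℕ} (X : Matrix (Fin n) (Fin p) ℝ)
    (S : Finset (Fin p)) (hS : S.card = k)
    (B : Matrix (Fin p) (Fin L) ℝ) (hBsupp : ∀ i ∉ S, ∀ j, B i j = 0)
    (W Y : Matrix (Fin n) (Fin L) ℝ) (hY : Y = X * B + W)
    (δ : ℝ) (hδ0 : 0 ≤ δ) (hδ1 : δ < 1)
    (hRIC : ∀ b : Fin p → ℝ,
      (∃ T : Finset (Fin p), T.card ≤ k + 1 ∧ ∀ i ∉ T, b i = 0) →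
      (1 - δ) * ∑ i, b i ^ 2 ≤ ∑ i, (X.mulVec b i) ^ 2)
    (S' : Finset (Fin p)) (hsub : S' ⊂ S)
    (Γ : ℝ) (hΓ : 0 < Γ)
    (hW : frob W < (Γ / (1 + Γ)) * (Real.sqrt (1 - δ) * minRowNorm B S))
    (PS PS' : Matrix (Fin n) (Fin n) ℝ)
    (hPS : IsOrthProjOnto PS (colSpan X S)) (hPS' : IsOrthProjOnto PS' (colSpan X S')) :
    frob ((1 - PS) * Y) / frob ((1 - PS') * Y) < Γ := by
  obtain ⟨hPS1, hPS2, hPS3⟩ := hPS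
  obtain ⟨hPS'1, hPS'2, hPS'3⟩ := hPS'
  have h1Γ : (0:ℝ) < 1 + Γ := by linarith
  have hΓfrac : (0:ℝ) < Γ / (1 + Γ) := div_pos hΓ h1Γ
  have hε_pos : 0 < Real.sqrt (1 - δ) * minRowNorm B S := by
    by_contra h
    push_neg at h
    have : (Γ / (1 + Γ)) * (Real.sqrt (1 - δ) * minRowNorm B S) ≤ 0 :=
      mul_nonpos_of_nonneg_of_nonpos hΓfrac.le h
    exact absurd (lt_of_le_of_lt (frob_nonneg W) hW) (by linarith)
  obtain ⟨i₀, hi₀S, hi₀S'⟩ := Finset.exists_of_ssubset hsub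
  have hXB_cols : ∀ j : Fin L, (fun r => (X * B) r j) = X *ᵥ (fun i => B i j) := by
    intro j; funext r; rw [mul_col]
  -- numerator
  have hnum_eq : (1 - PS) * Y = (1 - PS) * W := by
    rw [hY, Matrix.mul_add]
    have hz : (1 - PS) * (X * B) = 0 := by
      ext i j
      rw [mul_col]
      have hmem : (fun r => (X * B) r j) ∈ colSpan X S := by
        rw [hXB_cols j]
        exact mulVec_mem_colSpan X S fun i hi => hBsupp i hi j
      rw [← hPS3] at hmem
      have hfix := proj_fix hPS1 hmem
      simp [Matrix.sub_mulVec, hfix]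
    rw [hz, zero_add]
  have hnum_le : frob ((1 - PS) * Y) ≤ frob W := by
    rw [hnum_eq]
    apply frob_mono
    rw [frobSq_col, frobSq_col]
    refine Finset.sum_le_sum fun j _ => ?_
    simp only [mul_col]
    exact proj_contract hPS1 hPS2 _
  -- minRowNorm facts
  have hm_le : minRowNorm B S ≤ Real.sqrt (∑ j, B i₀ j ^ 2) := by
    apply csInf_le
    · exact ⟨0, fun x ⟨i, _, hx⟩ => hx ▸ Real.sqrt_nonneg _⟩
    · exact ⟨i₀, hi₀S, rfl⟩
  have hm_pos : 0 < minRowNorm B S := by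
    rcases lt_or_ge 0 (minRowNorm B S) with h | h
    · exact h
    · exfalso
      have : Real.sqrt (1 - δ) * minRowNorm B S ≤ 0 :=
        mul_nonpos_of_nonneg_of_nonpos (Real.sqrt_nonneg _) h
      linarith
  -- per-column choice of c
  have hchoice : ∀ j : Fin L, ∃ c : Fin p → ℝ, (∀ i ∉ S', c i = 0) ∧
      PS' *ᵥ (X *ᵥ (fun i => B i j)) = X *ᵥ c := by
    intro j
    have hmem : PS' *ᵥ (X *ᵥ (fun i => B i j)) ∈ colSpan X S' := by
      rw [← hPS'3]
      exact ⟨X *ᵥ (fun i => B i j), by rw [Matrix.mulVecLin_apply]⟩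
    obtain ⟨c, hc, hXc⟩ := colSpan_le_map X S' hmem
    exact ⟨c, hc, by rw [← hXc, Matrix.mulVecLin_apply]⟩
  choose c hc_supp hc_eq using hchoice
  -- per-column lower bound
  have hcol_lb : ∀ j : Fin L,
      (1 - δ) * (B i₀ j) ^ 2 ≤ ∑ i, ((((1 - PS') * (X * B) : Matrix (Fin n) (Fin L) ℝ)) i j) ^ 2 := by
    intro j
    set d : Fin p → ℝ := fun r => B r j - c j r with hd
    have hcols : ∀ i, (((1 - PS') * (X * B) : Matrix (Fin n) (Fin L) ℝ)) i j = (X *ᵥ d) i := by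
      intro i
      rw [mul_col, hXB_cols j]
      have : (X *ᵥ fun i => B i j) - X *ᵥ c j = X *ᵥ d := by
        rw [← Matrix.mulVec_sub]
        congr 1
      rw [Matrix.sub_mulVec, Matrix.one_mulVec, hc_eq j, this]
    have hsupp : ∀ i ∉ S, d i = 0 := by
      intro i hi
      have h1 : B i j = 0 := hBsupp i hi j
      have h2 : c j i = 0 := hc_supp j i (fun h => hi (hsub.1 h))
      simp [hd, h1, h2]
    have hric := hRIC d ⟨S, by omega, hsupp⟩
    have hpt : (B i₀ j) ^ 2 ≤ ∑ i, d i ^ 2 := by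
      have hdi : d i₀ = B i₀ j := by simp [hd, hc_supp j i₀ hi₀S']
      calc (B i₀ j) ^ 2 = d i₀ ^ 2 := by rw [hdi]
        _ ≤ ∑ i, d i ^ 2 :=
            Finset.single_le_sum (fun i _ => sq_nonneg (d i)) (Finset.mem_univ i₀)
    calc (1 - δ) * (B i₀ j) ^ 2
        ≤ (1 - δ) * ∑ i, d i ^ 2 := by
          apply mul_le_mul_of_nonneg_left hpt; linarith
      _ ≤ ∑ i, (X.mulVec d i) ^ 2 := hric
      _ = ∑ i, ((((1 - PS') * (X * B) : Matrix (Fin n) (Fin L) ℝ)) i j) ^ 2 :=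
          Finset.sum_congr rfl fun i _ => by rw [hcols i]
  -- lower bound for frob A1
  have hA1 : Real.sqrt (1 - δ) * minRowNorm B S ≤ frob ((1 - PS') * (X * B)) := by
    have h1 : (1 - δ) * (minRowNorm B S) ^ 2 ≤ frobSq ((1 - PS') * (X * B)) := by
      rw [frobSq_col]
      have hm2 : (minRowNorm B S) ^ 2 ≤ ∑ j, B i₀ j ^ 2 := by
        have hsq := Real.sq_sqrt (Finset.sum_nonneg (s := Finset.univ) fun (j : Fin L) _ => sq_nonneg (B i₀ j))
        calc (minRowNorm B S) ^ 2 ≤ Real.sqrt (∑ j, B i₀ j ^ 2) ^ 2 :=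
              pow_le_pow_left₀ hm_pos.le hm_le 2
          _ = ∑ j, B i₀ j ^ 2 := hsq
      calc (1 - δ) * (minRowNorm B S) ^ 2 ≤ (1 - δ) * ∑ j, B i₀ j ^ 2 := by
            apply mul_le_mul_of_nonneg_left hm2; linarith
        _ = ∑ j, (1 - δ) * B i₀ j ^ 2 := Finset.mul_sum _ _ _
        _ ≤ ∑ j, ∑ i, ((((1 - PS') * (X * B) : Matrix (Fin n) (Fin L) ℝ)) i j) ^ 2 :=
            Finset.sum_le_sum fun j _ => hcol_lb j
    have heps : Real.sqrt (1 - δ) * minRowNorm B S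
        = Real.sqrt ((1 - δ) * (minRowNorm B S) ^ 2) := by
      rw [Real.sqrt_mul (by linarith : (0:ℝ) ≤ 1 - δ), Real.sqrt_sq hm_pos.le]
    rw [heps]
    exact Real.sqrt_le_sqrt h1
  -- triangle inequality
  have htri : frob ((1 - PS') * (X * B)) - frob ((1 - PS') * W)
      ≤ frob ((1 - PS') * Y) := by
    have hsplit : (1 - PS') * Y = (1 - PS') * (X * B) + (1 - PS') * W := by
      rw [hY, Matrix.mul_add]
    rw [hsplit, frob_eq_norm, frob_eq_norm, frob_eq_norm]
    have heq : toE ((1 - PS') * (X * B) + (1 - PS') * W)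
        = toE ((1 - PS') * (X * B)) + toE ((1 - PS') * W) := rfl
    rw [heq]
    have h := norm_add_le (toE ((1 - PS') * (X * B)) + toE ((1 - PS') * W))
        (-(toE ((1 - PS') * W)))
    simp only [add_neg_cancel_right, norm_neg] at h
    linarith
  have hW'le : frob ((1 - PS') * W) ≤ frob W := by
    apply frob_mono
    rw [frobSq_col, frobSq_col]
    refine Finset.sum_le_sum fun j _ => ?_
    simp only [mul_col]
    exact proj_contract hPS'1 hPS'2 _
  -- denominator lower bound
  have hden_lb : (Real.sqrt (1 - δ) * minRowNorm B S) / (1 + Γ)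
      < frob ((1 - PS') * Y) := by
    have h2 : (Real.sqrt (1 - δ) * minRowNorm B S) / (1 + Γ)
        < Real.sqrt (1 - δ) * minRowNorm B S - frob W := by
      have hεeq : Real.sqrt (1 - δ) * minRowNorm B S
          - Γ / (1 + Γ) * (Real.sqrt (1 - δ) * minRowNorm B S)
          = (Real.sqrt (1 - δ) * minRowNorm B S) / (1 + Γ) := by
        field_simp
        ring
      linarith
    linarith
  have hden_pos : 0 < frob ((1 - PS') * Y) :=
    lt_trans (div_pos hε_pos h1Γ) hden_lb
  rw [div_lt_iff₀ hden_pos]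
  calc frob ((1 - PS) * Y) ≤ frob W := hnum_le
    _ < Γ / (1 + Γ) * (Real.sqrt (1 - δ) * minRowNorm B S) := hW
    _ = Γ * ((Real.sqrt (1 - δ) * minRowNorm B S) / (1 + Γ)) := by ring
    _ < Γ * frob ((1 - PS') * Y) := mul_lt_mul_of_pos_left hden_lb hΓ
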